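/- arXiv:1807.06999 — 3 statements merged into one kernel-verified Lean document; each statement's English description precedes it below -/
import Mathlib

section
/- If w is a weight on [0, r_max) that is bounded above and below (up to positive multiplicative constants) by a power series with nonnegative coefficients, and the integration operator J f(z) = ∫₀^z f(w) dw is bounded from H_w^∞ to H_u^∞, then there is a constant C > 0 such that ∫₀^r w(t) dt ≤ C u(r) for all 0 ≤ r < r_max. -/
open Complex MeasureTheory Real Set Filter
open scoped ENNReal Topology

noncomputable section

/-- The domain: disk of radius `rmax` (`rmax = 1` is the unit disk, `rmax = ⊤` is ℂ). -/
def Dom (rmax : ℝ≥0∞) : Set ℂ := {z : ℂ | ENNReal.ofReal ‖z‖ < rmax}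

/-- The integral mean `M_p(f, r)` for `0 < p < ∞`. -/
def Mp (p : ℝ) (f : ℂ → ℂ) (r : ℝ) : ℝ :=
  ((1 / (2 * π)) * ∫ θ in (0:ℝ)..(2 * π), ‖f ((r : ℂ) * Complex.exp ((θ : ℂ) * Complex.I))‖ ^ p)
    ^ (1 / p)

/-- The sup mean `M_∞(f, r)`. -/
def Minf (f : ℂ → ℂ) (r : ℝ) : ℝ :=
  ⨆ θ : ℝ, ‖f ((r : ℂ) * Complex.exp ((θ : ℂ) * Complex.I))‖

/-- A weight on `[0, rmax)`: positive, non-decreasing, continuous, unbounded. -/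
structure IsWeight (rmax : ℝ≥0∞) (w : ℝ → ℝ) : Prop where
  pos : ∀ r, 0 ≤ r → ENNReal.ofReal r < rmax → 0 < w r
  mono : ∀ r s, 0 ≤ r → r ≤ s → ENNReal.ofReal s < rmax → w r ≤ w s
  cont : ContinuousOn w {r : ℝ | 0 ≤ r ∧ ENNReal.ofReal r < rmax}
  unbdd : ∀ M : ℝ, ∃ r, 0 ≤ r ∧ ENNReal.ofReal r < rmax ∧ M < w r

/-- `log w(e^x)` is convex on the appropriate interval. -/
def LogConvexOn (rmax : ℝ≥0∞) (w : ℝ → ℝ) : Prop :=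
  ConvexOn ℝ {x : ℝ | ENNReal.ofReal (Real.exp x) < rmax}
    (fun x => Real.log (w (Real.exp x)))

/-- The integration operator `J f(z) = ∫₀^z f(ζ) dζ` (along the segment from 0 to z). -/
def Jop (f : ℂ → ℂ) (z : ℂ) : ℂ := ∫ t in (0:ℝ)..1, z * f ((t : ℂ) * z)

/-- The associated weight `w̃` (for `p = ∞`). -/
def assocInf (rmax : ℝ≥0∞) (w : ℝ → ℝ) (t : ℝ) : ℝ :=
  sSup {m : ℝ | ∃ f : ℂ → ℂ, DifferentiableOn ℂ f (Dom rmax) ∧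
    (∀ r, 0 ≤ r → ENNReal.ofReal r < rmax → Minf f r ≤ w r) ∧ m = Minf f t}

/-- The `p`-associated weight `w̃_p` for `0 < p < ∞`. -/
def assocP (rmax : ℝ≥0∞) (p : ℝ) (w : ℝ → ℝ) (t : ℝ) : ℝ :=
  sSup {m : ℝ | ∃ f : ℂ → ℂ, DifferentiableOn ℂ f (Dom rmax) ∧
    (∀ r, 0 ≤ r → ENNReal.ofReal r < rmax → Mp p f r ≤ w r) ∧ m = Mp p f t}

-- auxiliary lemmas
lemma aux_isOpen_Dom (rmax : ℝ≥0∞) : IsOpen (Dom rmax) :=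
  isOpen_lt (ENNReal.continuous_ofReal.comp continuous_norm) continuous_const

lemma aux_summable_norm {a : ℕ → ℝ} (ha : ∀ k, 0 ≤ a k)
    (z : ℂ) (h : Summable (fun k => a k * ‖z‖ ^ k)) :
    Summable (fun k => (a k : ℂ) * z ^ k) := by
  apply Summable.of_norm
  have : (fun k => ‖(a k : ℂ) * z ^ k‖) = fun k => a k * ‖z‖ ^ k := by
    funext k
    rw [norm_mul, norm_pow, Complex.norm_real, Real.norm_eq_abs, _root_.abs_of_nonneg (ha k)]
  rw [this]; exact h

theorem stmt_0' (rmax : ℝ≥0∞)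
    (w u : ℝ → ℝ)
    (hu : ∀ r, 0 ≤ r → ENNReal.ofReal r < rmax → 0 < u r)
    (a : ℕ → ℝ) (ha : ∀ k, 0 ≤ a k)
    (hsum : ∀ r : ℝ, 0 ≤ r → ENNReal.ofReal r < rmax → Summable (fun k => a k * r ^ k))
    (C₀ : ℝ) (hC₀ : 0 < C₀)
    (hequiv : ∀ r, 0 ≤ r → ENNReal.ofReal r < rmax →
      w r ≤ ∑' k : ℕ, a k * r ^ k ∧ (∑' k : ℕ, a k * r ^ k) ≤ C₀ * w r)
    (hwcont : ContinuousOn w {r : ℝ | 0 ≤ r ∧ ENNReal.ofReal r < rmax})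
    (B : ℝ)
    (hbdd : ∀ f : ℂ → ℂ, DifferentiableOn ℂ f (Dom rmax) →
      (∀ r, 0 ≤ r → ENNReal.ofReal r < rmax → Minf f r ≤ w r) →
      ∀ r, 0 ≤ r → ENNReal.ofReal r < rmax → Minf (Jop f) r ≤ B * u r) :
    ∃ C > 0, ∀ r, 0 ≤ r → ENNReal.ofReal r < rmax →
      (∫ t in (0:ℝ)..r, w t) ≤ C * u r := by
  classical
  set g : ℝ → ℝ := fun x => ∑' k : ℕ, a k * x ^ k with hg
  set f : ℂ → ℂ := fun z => (C₀ : ℂ)⁻¹ * ∑' k : ℕ, (a k : ℂ) * z ^ k with hf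
  -- membership facts
  have hmemD : ∀ z : ℂ, ENNReal.ofReal ‖z‖ < rmax → z ∈ Dom rmax := fun z hz => hz
  have hnormD : ∀ z : ℂ, z ∈ Dom rmax → ENNReal.ofReal ‖z‖ < rmax := fun z hz => hz
  -- summability for z ∈ Dom
  have hsumz : ∀ z : ℂ, z ∈ Dom rmax → Summable (fun k => (a k : ℂ) * z ^ k) := by
    intro z hz
    exact aux_summable_norm ha z (hsum ‖z‖ (norm_nonneg z) hz)
  -- differentiability
  have hD : DifferentiableOn ℂ f (Dom rmax) := by
    intro z hz
    obtain ⟨r', hr'0, hzr', hr'max⟩ := ENNReal.lt_iff_exists_real_btwn.mp (hnormD z hz)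
    have hzr : ‖z‖ < r' := by
      by_contra hcon
      push_neg at hcon
      exact absurd (ENNReal.ofReal_le_ofReal hcon) (not_le.mpr hzr')
    have hball : DifferentiableOn ℂ (fun w : ℂ => ∑' k : ℕ, (a k : ℂ) * w ^ k)
        (Metric.ball 0 r') := by
      apply differentiableOn_tsum_of_summable_norm (hsum r' hr'0 hr'max)
      · intro k; exact (differentiable_const _ |>.mul (differentiable_pow k)).differentiableOn
      · exact Metric.isOpen_ball
      · intro k y hy
        rw [norm_mul, norm_pow, Complex.norm_real, Real.norm_eq_abs, _root_.abs_of_nonneg (ha k)]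
        have : ‖y‖ ≤ r' := le_of_lt (by simpa using hy)
        exact mul_le_mul_of_nonneg_left (pow_le_pow_left₀ (norm_nonneg y) this k) (ha k)
    have hzb : z ∈ Metric.ball (0:ℂ) r' := by simpa using hzr
    have := (hball.differentiableAt (Metric.isOpen_ball.mem_nhds hzb)).const_mul (C₀:ℂ)⁻¹
    exact this.differentiableWithinAt
  -- pointwise norm bound
  have hfb : ∀ z : ℂ, z ∈ Dom rmax → ‖f z‖ ≤ C₀⁻¹ * ∑' k : ℕ, a k * ‖z‖ ^ k := by
    intro z hz
    rw [hf]
    simp only [norm_mul]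
    have h1 : ‖((C₀:ℂ))⁻¹‖ = C₀⁻¹ := by
      rw [norm_inv, Complex.norm_real, Real.norm_eq_abs, _root_.abs_of_pos hC₀]
    rw [h1]
    apply mul_le_mul_of_nonneg_left _ (by positivity)
    calc ‖∑' k : ℕ, (a k : ℂ) * z ^ k‖ ≤ ∑' k : ℕ, ‖(a k : ℂ) * z ^ k‖ :=
          norm_tsum_le_tsum_norm (by
            have : (fun k => ‖(a k : ℂ) * z ^ k‖) = fun k => a k * ‖z‖ ^ k := by
              funext k
              rw [norm_mul, norm_pow, Complex.norm_real, Real.norm_eq_abs, _root_.abs_of_nonneg (ha k)]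
            rw [this]; exact hsum ‖z‖ (norm_nonneg z) hz)
      _ = ∑' k : ℕ, a k * ‖z‖ ^ k := by
          congr 1; funext k
          rw [norm_mul, norm_pow, Complex.norm_real, Real.norm_eq_abs, _root_.abs_of_nonneg (ha k)]
  -- norm of r e^{iθ}
  have hpt : ∀ (r θ : ℝ), 0 ≤ r → ‖(r : ℂ) * Complex.exp ((θ : ℂ) * Complex.I)‖ = r := by
    intro r θ hr
    rw [norm_mul, Complex.norm_real, Real.norm_eq_abs, _root_.abs_of_nonneg hr,
      Complex.norm_exp_ofReal_mul_I, mul_one]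
  -- Minf f r ≤ w r
  have hMf : ∀ r, 0 ≤ r → ENNReal.ofReal r < rmax → Minf f r ≤ w r := by
    intro r hr hrm
    apply ciSup_le
    intro θ
    have hz : ((r:ℂ) * Complex.exp ((θ:ℂ) * Complex.I)) ∈ Dom rmax := by
      show ENNReal.ofReal _ < rmax
      rw [hpt r θ hr]; exact hrm
    calc ‖f ((r:ℂ) * Complex.exp ((θ:ℂ) * Complex.I))‖
        ≤ C₀⁻¹ * ∑' k : ℕ, a k * ‖(r:ℂ) * Complex.exp ((θ:ℂ) * Complex.I)‖ ^ k := hfb _ hz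
      _ = C₀⁻¹ * ∑' k : ℕ, a k * r ^ k := by rw [hpt r θ hr]
      _ ≤ C₀⁻¹ * (C₀ * w r) := by
          apply mul_le_mul_of_nonneg_left ((hequiv r hr hrm).2) (by positivity)
      _ = w r := by field_simp
  -- monotone g on [0,r] for r < rmax
  have hgmono : ∀ r, 0 ≤ r → ENNReal.ofReal r < rmax → MonotoneOn g (Icc 0 r) := by
    intro r hr hrm x hx y hy hxy
    have hx' : ENNReal.ofReal x < rmax := lt_of_le_of_lt (ENNReal.ofReal_le_ofReal hx.2) hrm
    have hy' : ENNReal.ofReal y < rmax := lt_of_le_of_lt (ENNReal.ofReal_le_ofReal hy.2) hrm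
    exact Summable.tsum_le_tsum (fun k => mul_le_mul_of_nonneg_left
      (pow_le_pow_left₀ hx.1 hxy k) (ha k)) (hsum x hx.1 hx') (hsum y hy.1 hy')
  -- the main estimate
  refine ⟨max (C₀ * B) 1, lt_of_lt_of_le one_pos (le_max_right _ _), ?_⟩
  intro r hr hrm
  have hur : 0 < u r := hu r hr hrm
  -- w ≤ g on [0,r]
  have hwg : ∀ x ∈ Icc (0:ℝ) r, w x ≤ g x := by
    intro x hx
    exact (hequiv x hx.1 (lt_of_le_of_lt (ENNReal.ofReal_le_ofReal hx.2) hrm)).1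
  -- integrability
  have hgint : IntervalIntegrable g volume 0 r := by
    apply MonotoneOn.intervalIntegrable
    rw [uIcc_of_le hr]
    exact hgmono r hr hrm
  have hwint : IntervalIntegrable w volume 0 r := by
    apply ContinuousOn.intervalIntegrable
    apply hwcont.mono
    rw [uIcc_of_le hr]
    intro x hx
    exact ⟨hx.1, lt_of_le_of_lt (ENNReal.ofReal_le_ofReal hx.2) hrm⟩
  have hwleg : (∫ t in (0:ℝ)..r, w t) ≤ ∫ t in (0:ℝ)..r, g t :=
    intervalIntegral.integral_mono_on hr hwint hgint hwg
  -- Jop f at the real point r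
  have hreal : ∀ x : ℝ, f (x:ℂ) = ((C₀⁻¹ * g x : ℝ) : ℂ) := by
    intro x
    rw [hf, hg]
    push_cast [Complex.ofReal_tsum]
    ring_nf
    congr 1
    exact tsum_congr fun k => by ring
  have hJr : Jop f (r:ℂ) = ((C₀⁻¹ * (r * ∫ t in (0:ℝ)..1, g (t * r)) : ℝ) : ℂ) := by
    rw [Jop]
    have : (fun t : ℝ => (r:ℂ) * f ((t:ℂ) * (r:ℂ)))
        = fun t : ℝ => ((r * (C₀⁻¹ * g (t * r)) : ℝ) : ℂ) := by
      funext t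
      rw [show ((t:ℂ) * (r:ℂ)) = ((t * r : ℝ) : ℂ) by push_cast; ring, hreal]
      push_cast; ring
    rw [this, intervalIntegral.integral_ofReal]
    norm_cast
    rw [← intervalIntegral.integral_const_mul]
    rw [← intervalIntegral.integral_const_mul]
    congr 1; funext t; ring
  have hsubst : r * ∫ t in (0:ℝ)..1, g (t * r) = ∫ t in (0:ℝ)..r, g t := by
    have := intervalIntegral.smul_integral_comp_mul_right (a := (0:ℝ)) (b := 1) (f := g) r
    simpa using this
  -- lower bound on Minf (Jop f) r
  have hgnn : 0 ≤ ∫ t in (0:ℝ)..r, g t := by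
    apply intervalIntegral.integral_nonneg hr
    intro x hx
    have hx' : ENNReal.ofReal x < rmax := lt_of_le_of_lt (ENNReal.ofReal_le_ofReal hx.2) hrm
    exact tsum_nonneg (fun k => mul_nonneg (ha k) (pow_nonneg hx.1 k))
  have hnormJr : C₀⁻¹ * ∫ t in (0:ℝ)..r, g t ≤ ‖Jop f (r:ℂ)‖ := by
    rw [hJr, hsubst, Complex.norm_real, Real.norm_eq_abs]
    exact le_abs_self _
  -- BddAbove of the circle values of Jop f
  have hJb : ∀ θ : ℝ, ‖Jop f ((r:ℂ) * Complex.exp ((θ:ℂ) * Complex.I))‖ ≤ r * w r := by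
    intro θ
    set z := (r:ℂ) * Complex.exp ((θ:ℂ) * Complex.I) with hzdef
    have hznorm : ‖z‖ = r := hpt r θ hr
    rw [Jop]
    have hb : ∀ t ∈ Set.uIoc (0:ℝ) 1, ‖z * f ((t:ℂ) * z)‖ ≤ r * w r := by
      intro t ht
      rw [uIoc_of_le zero_le_one] at ht
      have ht0 : 0 ≤ t := le_of_lt ht.1
      have ht1 : t ≤ 1 := ht.2
      have htz : ‖(t:ℂ) * z‖ = t * r := by
        rw [norm_mul, Complex.norm_real, Real.norm_eq_abs, _root_.abs_of_nonneg ht0, hznorm]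
      have htrm : ENNReal.ofReal (t * r) < rmax := by
        refine lt_of_le_of_lt (ENNReal.ofReal_le_ofReal ?_) hrm
        calc t * r ≤ 1 * r := mul_le_mul_of_nonneg_right ht1 hr
          _ = r := one_mul r
      have hmem : ((t:ℂ) * z) ∈ Dom rmax := by
        show ENNReal.ofReal _ < rmax
        rw [htz]; exact htrm
      have htr0 : 0 ≤ t * r := mul_nonneg ht0 hr
      have h1 : ‖f ((t:ℂ) * z)‖ ≤ C₀⁻¹ * ∑' k : ℕ, a k * (t*r) ^ k := by
        have := hfb _ hmem
        rwa [htz] at this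
      have h2 : (∑' k : ℕ, a k * (t*r) ^ k) ≤ ∑' k : ℕ, a k * r ^ k := by
        apply Summable.tsum_le_tsum _ (hsum _ htr0 htrm) (hsum r hr hrm)
        intro k
        apply mul_le_mul_of_nonneg_left _ (ha k)
        apply pow_le_pow_left₀ htr0
        calc t * r ≤ 1 * r := mul_le_mul_of_nonneg_right ht1 hr
          _ = r := one_mul r
      have h3 : (∑' k : ℕ, a k * r ^ k) ≤ C₀ * w r := (hequiv r hr hrm).2
      calc ‖z * f ((t:ℂ) * z)‖ = r * ‖f ((t:ℂ) * z)‖ := by rw [norm_mul, hznorm]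
        _ ≤ r * (C₀⁻¹ * (C₀ * w r)) := by
            apply mul_le_mul_of_nonneg_left _ hr
            refine le_trans h1 ?_
            exact mul_le_mul_of_nonneg_left (le_trans h2 h3) (by positivity)
        _ = r * w r := by field_simp
    have := intervalIntegral.norm_integral_le_of_norm_le_const hb
    simpa using this
  have hbdda : BddAbove (Set.range fun θ : ℝ =>
      ‖Jop f ((r:ℂ) * Complex.exp ((θ:ℂ) * Complex.I))‖) := by
    refine ⟨r * w r, ?_⟩
    rintro x ⟨θ, rfl⟩
    exact hJb θ
  have hle : ‖Jop f (r:ℂ)‖ ≤ Minf (Jop f) r := by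
    have := le_ciSup hbdda (0:ℝ)
    simpa [Minf] using this
  have hfinal := hbdd f hD hMf r hr hrm
  -- chain it all
  have key : C₀⁻¹ * (∫ t in (0:ℝ)..r, w t) ≤ B * u r := by
    calc C₀⁻¹ * (∫ t in (0:ℝ)..r, w t) ≤ C₀⁻¹ * ∫ t in (0:ℝ)..r, g t := by
          exact mul_le_mul_of_nonneg_left hwleg (by positivity)
      _ ≤ ‖Jop f (r:ℂ)‖ := hnormJr
      _ ≤ Minf (Jop f) r := hle
      _ ≤ B * u r := hfinal
  have : (∫ t in (0:ℝ)..r, w t) ≤ C₀ * B * u r := by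
    have := mul_le_mul_of_nonneg_left key (le_of_lt hC₀)
    calc (∫ t in (0:ℝ)..r, w t) = C₀ * (C₀⁻¹ * ∫ t in (0:ℝ)..r, w t) := by field_simp
      _ ≤ C₀ * (B * u r) := mul_le_mul_of_nonneg_left key (le_of_lt hC₀)
      _ = C₀ * B * u r := by ring
  calc (∫ t in (0:ℝ)..r, w t) ≤ C₀ * B * u r := this
    _ ≤ max (C₀ * B) 1 * u r := mul_le_mul_of_nonneg_right (le_max_left _ _) (le_of_lt hur)

/-- if `w` is equivalent to a power series with nonnegative coefficients and
`J : H_w^∞ → H_u^∞` is bounded, then `∫₀^r w ≤ C u(r)`. -/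
theorem stmt_0 (rmax : ℝ≥0∞) (hrmax : rmax = 1 ∨ rmax = ⊤)
    (w u : ℝ → ℝ) (hw : IsWeight rmax w) (hu : IsWeight rmax u)
    (a : ℕ → ℝ) (ha : ∀ k, 0 ≤ a k)
    (hsum : ∀ r : ℝ, 0 ≤ r → ENNReal.ofReal r < rmax → Summable (fun k => a k * r ^ k))
    (C₀ : ℝ) (hC₀ : 0 < C₀)
    (hequiv : ∀ r, 0 ≤ r → ENNReal.ofReal r < rmax →
      w r ≤ ∑' k : ℕ, a k * r ^ k ∧ (∑' k : ℕ, a k * r ^ k) ≤ C₀ * w r)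
    (B : ℝ)
    (hbdd : ∀ f : ℂ → ℂ, DifferentiableOn ℂ f (Dom rmax) →
      (∀ r, 0 ≤ r → ENNReal.ofReal r < rmax → Minf f r ≤ w r) →
      ∀ r, 0 ≤ r → ENNReal.ofReal r < rmax → Minf (Jop f) r ≤ B * u r) :
    ∃ C > 0, ∀ r, 0 ≤ r → ENNReal.ofReal r < rmax →
      (∫ t in (0:ℝ)..r, w t) ≤ C * u r := by
  exact stmt_0' rmax w u hu.pos a ha hsum C₀ hC₀ hequiv hw.cont B hbdd
end
end

section
/- Let 0 < p < ∞ and let w be a log-convex weight on [0,1). Then there is C > 0 such that w̃_p(r) ≤ w(r) ≤ C w̃_p(r) for all 0 ≤ r < 1; that is, every log-convex weight on [0,1) is equivalent to its p-associated weight. -/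
open Complex MeasureTheory Real Set Filter
open scoped ENNReal Topology

noncomputable section

section proofwork

lemma Mp_monomial (p : ℝ) (hp : 0 < p) (c : ℂ) (n : ℕ) (r : ℝ) (hr : 0 ≤ r) :
    Mp p (fun z => c * z ^ n) r = ‖c‖ * r ^ n := by
  have h2π : (2:ℝ) * π ≠ 0 := by positivity
  have hnorm : ∀ θ : ℝ, ‖c * ((r : ℂ) * Complex.exp ((θ : ℂ) * Complex.I)) ^ n‖ = ‖c‖ * r ^ n := by
    intro θ
    rw [norm_mul, norm_pow, norm_mul]
    simp [Complex.norm_exp, _root_.abs_of_nonneg hr]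
  unfold Mp
  have : (∫ θ in (0:ℝ)..(2 * π), ‖(fun z => c * z ^ n) ((r : ℂ) * Complex.exp ((θ : ℂ) * Complex.I))‖ ^ p)
      = ∫ θ in (0:ℝ)..(2 * π), (‖c‖ * r ^ n) ^ p := by
    refine intervalIntegral.integral_congr fun θ _ => ?_
    simp only [hnorm]
  rw [this, intervalIntegral.integral_const, smul_eq_mul, sub_zero, ← mul_assoc,
    one_div_mul_cancel h2π, one_mul, ← Real.rpow_mul (by positivity),
    mul_one_div_cancel hp.ne', Real.rpow_one]

lemma key_ineq (w : ℝ → ℝ) (hw : IsWeight 1 w) (hlc : LogConvexOn 1 w)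
    (t : ℝ) (ht : 1/2 ≤ t) (ht1 : t < 1) :
    ∃ n : ℕ, 1 ≤ n ∧ ∀ r, 0 < r → r < 1 → w t * r ^ n ≤ Real.exp 3 * (w r * t ^ n) := by
  have ht0 : (0:ℝ) < t := lt_of_lt_of_le (by norm_num) ht
  have hlt1 : ∀ r : ℝ, r < 1 → ENNReal.ofReal r < 1 := fun r h => ENNReal.ofReal_lt_one.2 h
  have wpos : ∀ r : ℝ, 0 ≤ r → r < 1 → 0 < w r := fun r h h' => hw.pos r h (hlt1 r h')
  have hwt : 0 < w t := wpos t ht0.le ht1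
  -- find t1 ∈ (t,1) with w t1 < e * w t
  have hev : ∃ t1, (t < t1 ∧ t1 < 1) ∧ w t1 < Real.exp 1 * w t := by
    have hc : ContinuousWithinAt w {r : ℝ | 0 ≤ r ∧ ENNReal.ofReal r < 1} t :=
      hw.cont t ⟨ht0.le, hlt1 t ht1⟩
    have hmono : 𝓝[Set.Ioo t 1] t ≤ 𝓝[{r : ℝ | 0 ≤ r ∧ ENNReal.ofReal r < 1}] t :=
      nhdsWithin_mono _ (fun r hr => ⟨(ht0.trans hr.1).le, hlt1 r hr.2⟩)
    have hlt : w t < Real.exp 1 * w t := by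
      nlinarith [Real.exp_one_gt_d9, hwt]
    have h1 : ∀ᶠ r in 𝓝[{r : ℝ | 0 ≤ r ∧ ENNReal.ofReal r < 1}] t, w r < Real.exp 1 * w t :=
      hc (Iio_mem_nhds hlt)
    have h2 : ∀ᶠ r in 𝓝[Set.Ioo t 1] t, w r < Real.exp 1 * w t := hmono h1
    haveI : (𝓝[Set.Ioo t 1] t).NeBot := left_nhdsWithin_Ioo_neBot ht1
    obtain ⟨t1, ht1m, ht1w⟩ := (eventually_mem_nhdsWithin.and h2).exists
    exact ⟨t1, ⟨ht1m.1, ht1m.2⟩, ht1w⟩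
  obtain ⟨t1, ⟨htt1, ht11⟩, hwt1⟩ := hev
  have ht10 : 0 < t1 := ht0.trans htt1
  set x0 := Real.log t with hx0def
  set x1 := Real.log t1 with hx1def
  have hx0neg : x0 < 0 := Real.log_neg ht0 ht1
  have hx1neg : x1 < 0 := Real.log_neg ht10 ht11
  have hx01 : x0 < x1 := Real.log_lt_log ht0 htt1
  have hlog2 : Real.log 2 ≤ 1 := by
    nlinarith [Real.log_le_sub_one_of_pos (by norm_num : (0:ℝ) < 2)]
  have hx0ge : -1 ≤ x0 := by
    have : Real.log (1/2) ≤ x0 := Real.log_le_log (by norm_num) ht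
    rw [one_div, Real.log_inv] at this
    linarith
  set φ : ℝ → ℝ := fun x => Real.log (w (Real.exp x)) with hφdef
  have hφ : ConvexOn ℝ (Set.Iio (0:ℝ)) φ := by
    have hset : {x : ℝ | ENNReal.ofReal (Real.exp x) < 1} = Set.Iio (0:ℝ) := by
      ext x; simp [ENNReal.ofReal_lt_one, Real.exp_lt_one_iff]
    have := hlc
    unfold LogConvexOn at this
    rwa [hset] at this
  have hφ0 : φ x0 = Real.log (w t) := by rw [hφdef]; simp [hx0def, Real.exp_log ht0]
  have hφ1 : φ x1 = Real.log (w t1) := by rw [hφdef]; simp [hx1def, Real.exp_log ht10]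
  have hφmono : φ x0 ≤ φ x1 := by
    rw [hφ0, hφ1]
    exact Real.log_le_log hwt (hw.mono t t1 ht0.le htt1.le (hlt1 t1 ht11))
  set s := (φ x1 - φ x0) / (x1 - x0) with hsdef
  have hx10pos : 0 < x1 - x0 := sub_pos.2 hx01
  have hs0 : 0 ≤ s := div_nonneg (sub_nonneg.2 hφmono) hx10pos.le
  set n : ℕ := ⌈s⌉₊ + 1 with hndef
  have hsn : s ≤ (n:ℝ) := by
    have := Nat.le_ceil s
    push_cast [hndef]; linarith
  have hns : (n:ℝ) ≤ s + 2 := by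
    have := Nat.ceil_lt_add_one hs0
    push_cast [hndef]; linarith
  have hs1 : s * (x1 - x0) = φ x1 - φ x0 := div_mul_cancel₀ _ hx10pos.ne'
  have hφ1le : φ x1 - φ x0 ≤ 1 := by
    rw [hφ0, hφ1]
    have : Real.log (w t1) ≤ Real.log (Real.exp 1 * w t) :=
      Real.log_le_log (wpos t1 ht10.le ht11) hwt1.le
    rw [Real.log_mul (Real.exp_ne_zero 1) hwt.ne', Real.log_exp] at this
    linarith
  have hx10le : x1 - x0 ≤ 1 := by linarith
  -- main pointwise claim
  have claim : ∀ x, x < 0 → φ x0 + (n:ℝ) * (x - x0) - 3 ≤ φ x := by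
    intro x hx
    rcases lt_trichotomy x x0 with h | h | h
    · have hsec := hφ.secant_mono (a := x0) (x := x) (y := x1) hx0neg (h.trans hx0neg) hx1neg
        h.ne (ne_of_gt hx01) (h.trans hx01).le
      have hxx0 : x - x0 < 0 := sub_neg.2 h
      have h1 : s * (x - x0) ≤ φ x - φ x0 := by
        rw [div_le_iff_of_neg hxx0] at hsec
        linarith [hsec]
      have h2 : (n:ℝ) * (x - x0) ≤ s * (x - x0) :=
        mul_le_mul_of_nonpos_right hsn hxx0.le
      linarith
    · subst h
      have hz : (n:ℝ) * (x0 - x0) = 0 := by ring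
      linarith
    · rcases lt_or_ge x x1 with h' | h'
      · -- x0 < x < x1
        have hφx : φ x0 ≤ φ x := by
          rw [hφ0, hφdef]
          have hex : Real.exp x < 1 := Real.exp_lt_one_iff.2 hx
          have : t ≤ Real.exp x := by
            rw [← Real.exp_log ht0]; exact (Real.exp_le_exp.2 h.le)
          exact Real.log_le_log hwt (hw.mono t (Real.exp x) ht0.le this (hlt1 _ hex))
        have hA : (n:ℝ) * (x - x0) ≤ (n:ℝ) * (x1 - x0) :=
          mul_le_mul_of_nonneg_left (by linarith) (Nat.cast_nonneg n)
        have hB : (n:ℝ) * (x1 - x0) ≤ (s + 2) * (x1 - x0) :=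
          mul_le_mul_of_nonneg_right hns hx10pos.le
        have hC : (s + 2) * (x1 - x0) = s * (x1 - x0) + 2 * (x1 - x0) := by ring
        linarith
      · -- x1 ≤ x < 0
        have hxx0 : 0 < x - x0 := by linarith
        have hsec := hφ.secant_mono (a := x0) (x := x1) (y := x) hx0neg hx1neg hx
          (ne_of_gt hx01) h.ne' h'
        have h1 : s * (x - x0) ≤ φ x - φ x0 := by
          rw [le_div_iff₀ hxx0] at hsec
          linarith [hsec]
        have hd : (n:ℝ) * (x - x0) - s * (x - x0) = ((n:ℝ) - s) * (x - x0) := by ring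
        have hE : ((n:ℝ) - s) * (x - x0) ≤ 2 * (x - x0) :=
          mul_le_mul_of_nonneg_right (by linarith) hxx0.le
        have hF : x - x0 ≤ 1 := by linarith
        linarith
  refine ⟨n, le_add_self, fun r hr0 hr1 => ?_⟩
  have hwr : 0 < w r := wpos r hr0.le hr1
  have hx : Real.log r < 0 := Real.log_neg hr0 hr1
  have hcl := claim (Real.log r) hx
  have hφr : φ (Real.log r) = Real.log (w r) := by rw [hφdef]; simp [Real.exp_log hr0]
  rw [hφr, hφ0] at hcl
  have hlhs : 0 < w t * r ^ n := by positivity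
  have hrhs : 0 < Real.exp 3 * (w r * t ^ n) := by positivity
  rw [← Real.log_le_log_iff hlhs hrhs, Real.log_mul hwt.ne' (by positivity),
    Real.log_mul (Real.exp_ne_zero 3) (by positivity),
    Real.log_mul hwr.ne' (by positivity), Real.log_pow, Real.log_pow, Real.log_exp]
  linarith

end proofwork

/-- a log-convex weight on `[0,1)` is equivalent to its `p`-associated weight. -/
theorem stmt_6 (p : ℝ) (hp : 0 < p) (w : ℝ → ℝ)
    (hw : IsWeight 1 w) (hlc : LogConvexOn 1 w) :
    ∃ C > 0, ∀ r : ℝ, 0 ≤ r → r < 1 →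
      assocP 1 p w r ≤ w r ∧ w r ≤ C * assocP 1 p w r := by
  have hlt1 : ∀ r : ℝ, r < 1 → ENNReal.ofReal r < 1 := fun r h => ENNReal.ofReal_lt_one.2 h
  have wpos : ∀ r : ℝ, 0 ≤ r → r < 1 → 0 < w r := fun r h h' => hw.pos r h (hlt1 r h')
  have hw0 : 0 < w 0 := wpos 0 le_rfl one_pos
  have hwhalf : 0 < w (1/2) := wpos _ (by norm_num) (by norm_num)
  have hw0half : w 0 ≤ w (1/2) := hw.mono 0 (1/2) le_rfl (by norm_num) (hlt1 _ (by norm_num))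
  set S : ℝ → Set ℝ := fun t => {m : ℝ | ∃ f : ℂ → ℂ, DifferentiableOn ℂ f (Dom 1) ∧
    (∀ r, 0 ≤ r → ENNReal.ofReal r < 1 → Mp p f r ≤ w r) ∧ m = Mp p f t} with hSdef
  have hassoc : ∀ t, assocP 1 p w t = sSup (S t) := fun t => rfl
  have hmem : ∀ (c : ℝ) (n : ℕ) (t : ℝ), 0 ≤ t → 0 ≤ c →
      (∀ r, 0 ≤ r → r < 1 → c * r ^ n ≤ w r) → c * t ^ n ∈ S t := by
    intro c n t ht hc hble
    refine ⟨fun z => (c:ℂ) * z ^ n,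
      ((differentiable_const _).mul (differentiable_pow n)).differentiableOn, ?_, ?_⟩
    · intro r hr hr1
      rw [Mp_monomial p hp _ n r hr, Complex.norm_real, Real.norm_eq_abs, _root_.abs_of_nonneg hc]
      exact hble r hr (ENNReal.ofReal_lt_one.1 hr1)
    · rw [Mp_monomial p hp _ n t ht, Complex.norm_real, Real.norm_eq_abs, _root_.abs_of_nonneg hc]
  have hbdd : ∀ t, 0 ≤ t → t < 1 → ∀ m ∈ S t, m ≤ w t := by
    intro t ht ht1 m hm
    obtain ⟨f, hf, hfle, rfl⟩ := hm
    exact hfle t ht (hlt1 t ht1)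
  have hne : ∀ t, 0 ≤ t → (w 0) * t ^ 0 ∈ S t := by
    intro t ht
    exact hmem (w 0) 0 t ht hw0.le (fun r hr hr1 => by
      simpa using hw.mono 0 r le_rfl hr (hlt1 r hr1))
  have he3 : (1:ℝ) ≤ Real.exp 3 := by nlinarith [Real.add_one_le_exp (3:ℝ)]
  have hratio : 1 ≤ w (1/2) / w 0 := (one_le_div hw0).2 hw0half
  refine ⟨Real.exp 3 * (w (1/2) / w 0), by positivity, fun t ht ht1 => ?_⟩
  have hBdd : BddAbove (S t) := ⟨w t, hbdd t ht ht1⟩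
  constructor
  · rw [hassoc]
    exact csSup_le ⟨_, hne t ht⟩ (hbdd t ht ht1)
  · rcases lt_or_ge t (1/2) with h | h
    · have h1 : w 0 ≤ assocP 1 p w t := by
        have := le_csSup hBdd (hne t ht)
        rw [hassoc]; simpa using this
      have h2 : w t ≤ w (1/2) := hw.mono t (1/2) ht h.le (hlt1 _ (by norm_num))
      have h3 : w (1/2) / w 0 * w 0 = w (1/2) := by field_simp
      calc w t ≤ w (1/2) := h2
        _ = w (1/2) / w 0 * w 0 := h3.symm
        _ ≤ w (1/2) / w 0 * assocP 1 p w t := mul_le_mul_of_nonneg_left h1 (by positivity)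
        _ ≤ Real.exp 3 * (w (1/2) / w 0 * assocP 1 p w t) :=
            le_mul_of_one_le_left (mul_nonneg (by positivity) (hw0.le.trans h1)) he3
        _ = Real.exp 3 * (w (1/2) / w 0) * assocP 1 p w t := by ring
    · obtain ⟨n, hn1, hKI⟩ := key_ineq w hw hlc t h ht1
      have ht0 : (0:ℝ) < t := lt_of_lt_of_le (by norm_num) h
      have hwt : 0 < w t := wpos t ht ht1
      set c := w t / (Real.exp 3 * t ^ n) with hcdef
      have hc0 : 0 < c := by positivity
      have hKIr : ∀ r, 0 ≤ r → r < 1 → c * r ^ n ≤ w r := by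
        intro r hr hr1
        rcases eq_or_lt_of_le hr with h0 | h0
        · rw [← h0, zero_pow (by omega : n ≠ 0), mul_zero]
          exact hw0.le
        · have hki := hKI r h0 hr1
          rw [hcdef, div_mul_eq_mul_div, div_le_iff₀ (by positivity)]
          have h' : Real.exp 3 * (w r * t ^ n) = w r * (Real.exp 3 * t ^ n) := by ring
          linarith
      have hmemc := hmem c n t ht hc0.le hKIr
      have hct : c * t ^ n = w t / Real.exp 3 := by
        rw [hcdef]; field_simp
      have hle : w t / Real.exp 3 ≤ assocP 1 p w t := by
        rw [hassoc, ← hct]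
        exact le_csSup hBdd hmemc
      have hassoc0 : 0 < assocP 1 p w t := lt_of_lt_of_le (by positivity) hle
      have hfs : Real.exp 3 * (w t / Real.exp 3) = w t := by field_simp
      calc w t = Real.exp 3 * (w t / Real.exp 3) := hfs.symm
        _ ≤ Real.exp 3 * assocP 1 p w t := mul_le_mul_of_nonneg_left hle (Real.exp_pos 3).le
        _ ≤ Real.exp 3 * (w (1/2) / w 0) * assocP 1 p w t :=
            mul_le_mul_of_nonneg_right
              (le_mul_of_one_le_right (Real.exp_pos 3).le hratio) hassoc0.le
end
end

section
/- Let w, u be weights on [0, ∞) with w(1+r) ≤ C u(r) for all r ≥ 0. Then differentiation is bounded from H_w^p(ℂ) to H_u^p(ℂ) for every 0 < p < ∞. -/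
open Complex MeasureTheory Real Set Filter
open scoped ENNReal Topology

noncomputable section

open Metric intervalIntegral

namespace S12

/-- basic periodicity -/
lemma periodic_aux {E : Type*} [NormedAddCommGroup E] (g : ℂ → E) (a : ℂ) :
    Function.Periodic (fun θ : ℝ => g (Complex.exp ((θ:ℂ) * Complex.I) * a)) (2 * π) := by
  intro θ
  have : ((θ + 2 * π : ℝ) : ℂ) * Complex.I = (θ:ℂ) * Complex.I + 2 * π * Complex.I := by
    push_cast; ring
  simp only [this, Complex.exp_add, Complex.exp_two_pi_mul_I, mul_one]

lemma integral_rotate {E : Type*} [NormedAddCommGroup E] [NormedSpace ℝ E] (g : ℂ → E)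
    (a : ℂ) :
    (∫ θ in (0:ℝ)..(2*π), g (Complex.exp ((θ:ℂ) * Complex.I) * a)) =
      ∫ θ in (0:ℝ)..(2*π), g (((‖a‖ : ℝ) : ℂ) * Complex.exp ((θ:ℂ) * Complex.I)) := by
  rcases eq_or_ne a 0 with rfl | ha
  · simp
  · have key : ∀ θ : ℝ, Complex.exp ((θ:ℂ) * Complex.I) * a =
        ((‖a‖ : ℝ) : ℂ) * Complex.exp (((θ + Complex.arg a : ℝ) : ℂ) * Complex.I) := by
      intro θ
      conv_lhs => rw [← Complex.norm_mul_exp_arg_mul_I a]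
      push_cast
      rw [add_mul, Complex.exp_add]
      ring
    simp only [key]
    have h1 := integral_comp_add_right (a := (0:ℝ)) (b := 2*π)
      (f := fun θ : ℝ => g (((‖a‖ : ℝ) : ℂ) * Complex.exp ((θ:ℂ) * Complex.I)))
      (Complex.arg a)
    rw [h1]
    have hper : Function.Periodic
        (fun θ : ℝ => g (((‖a‖ : ℝ) : ℂ) * Complex.exp ((θ:ℂ) * Complex.I))) (2 * π) := by
      intro θ
      have : ((θ + 2 * π : ℝ) : ℂ) * Complex.I = (θ:ℂ) * Complex.I + 2 * π * Complex.I := by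
        push_cast; ring
      simp only [this, Complex.exp_add, Complex.exp_two_pi_mul_I, mul_one]
    have := hper.intervalIntegral_add_eq (0 + Complex.arg a) 0
    simpa [add_comm, add_assoc, add_left_comm] using this

variable {f : ℂ → ℂ}

lemma circle_MV (hf : Differentiable ℂ f) (c : ℂ) {R : ℝ} (hR : 0 < R) :
    (∫ θ in (0:ℝ)..(2*π), f (c + (R:ℂ) * Complex.exp ((θ:ℂ) * Complex.I))) =
      (2*π : ℂ) * f c := by
  have h := (hf.diffContOnCl (s := ball c R)).circleIntegral_sub_inv_smul
    (w := c) (mem_ball_self hR)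
  rw [circleIntegral] at h
  have key : ∀ θ : ℝ, (deriv (circleMap c R) θ) • (circleMap c R θ - c)⁻¹ • f (circleMap c R θ)
      = Complex.I * f (c + (R:ℂ) * Complex.exp ((θ:ℂ) * Complex.I)) := by
    intro θ
    have hne : circleMap 0 R θ ≠ 0 := circleMap_ne_center hR.ne'
    rw [deriv_circleMap, circleMap_sub_center, smul_eq_mul, smul_eq_mul]
    rw [show circleMap c R θ = c + (R:ℂ) * Complex.exp ((θ:ℂ) * Complex.I) from rfl]
    field_simp
  simp only [key] at h
  rw [intervalIntegral.integral_const_mul] at h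
  have h2 : (2 * ↑π * Complex.I : ℂ) • f c = Complex.I * ((2*π:ℂ) * f c) := by
    rw [smul_eq_mul]; ring
  rw [h2] at h
  exact mul_left_cancel₀ Complex.I_ne_zero h

lemma circle_MV' (hf : Differentiable ℂ f) (c : ℂ) (a : ℂ) :
    (∫ θ in (0:ℝ)..(2*π), f (c + Complex.exp ((θ:ℂ) * Complex.I) * a)) = (2*π : ℂ) * f c := by
  have := integral_rotate (fun z => f (c + z)) a
  rw [this]
  rcases eq_or_ne a 0 with rfl | ha
  · simp only [norm_zero, Complex.ofReal_zero, zero_mul, add_zero]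
    rw [intervalIntegral.integral_const]
    rw [sub_zero, Complex.real_smul]
    push_cast; ring
  · exact circle_MV hf c (norm_pos_iff.mpr ha)


lemma ball_shift {E : Type*} [NormedAddCommGroup E] [NormedSpace ℝ E] (g : ℂ → E) (c : ℂ)
    (R : ℝ) : ∫ z in ball c R, g z = ∫ z in ball (0:ℂ) R, g (c + z) := by
  have hmp : MeasurePreserving (fun z : ℂ => c + z) volume volume :=
    measurePreserving_add_left volume c
  have hemb : MeasurableEmbedding (fun z : ℂ => c + z) :=
    (Homeomorph.addLeft c).measurableEmbedding
  have hpre : (fun z : ℂ => c + z) ⁻¹' ball c R = ball (0:ℂ) R := by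
    ext z
    simp [mem_ball, dist_eq_norm]
  rw [← hpre, hmp.setIntegral_preimage_emb hemb]

lemma rot_inv {E : Type*} [NormedAddCommGroup E] [NormedSpace ℝ E] (g : ℂ → E) (R : ℝ)
    (θ : ℝ) :
    ∫ z in ball (0:ℂ) R, g (Complex.exp ((θ:ℂ) * Complex.I) * z) =
      ∫ z in ball (0:ℂ) R, g z := by
  set e : ℂ ≃ₗᵢ[ℝ] ℂ := rotation (Circle.exp θ) with he
  have hmp : MeasurePreserving e volume volume := e.measurePreserving
  have hemb : MeasurableEmbedding e := e.toHomeomorph.measurableEmbedding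
  have hpre : (e : ℂ → ℂ) ⁻¹' ball (0:ℂ) R = ball (0:ℂ) R := by
    ext z
    simp only [mem_preimage, mem_ball_zero_iff]
    rw [e.norm_map]
  have := hmp.setIntegral_preimage_emb hemb g (ball (0:ℂ) R)
  rw [hpre] at this
  rw [← this]
  congr 1

lemma ball_MV (hf : Differentiable ℂ f) (c : ℂ) {R : ℝ} (hR : 0 < R) :
    (∫ z in ball (0:ℂ) R, f (c + z)) = (volume (ball (0:ℂ) R)).toReal • f c := by
  set E₀ : ℂ := ∫ z in ball (0:ℂ) R, f (c + z) with hE₀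
  -- boundedness for Fubini
  obtain ⟨M, hM⟩ : ∃ M, ∀ y ∈ closedBall (0:ℂ) (‖c‖ + R), ‖f y‖ ≤ M :=
    (isCompact_closedBall _ _).exists_bound_of_continuousOn hf.continuous.continuousOn
  have hcont : Continuous (fun q : ℝ × ℂ => f (c + Complex.exp ((q.1:ℂ) * Complex.I) * q.2)) := by
    have hfc := hf.continuous
    fun_prop
  have hint : Integrable (Function.uncurry fun (θ:ℝ) (z:ℂ) =>
      f (c + Complex.exp ((θ:ℂ) * Complex.I) * z))
      ((volume.restrict (Set.Ioc (0:ℝ) (2*π))).prod (volume.restrict (ball (0:ℂ) R))) := by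
    rw [Measure.prod_restrict]
    have : IntegrableOn (Function.uncurry fun (θ:ℝ) (z:ℂ) =>
        f (c + Complex.exp ((θ:ℂ) * Complex.I) * z))
        ((Set.Icc (0:ℝ) (2*π)) ×ˢ closedBall (0:ℂ) R) (volume.prod volume) := by
      rw [← Measure.volume_eq_prod]
      exact hcont.continuousOn.integrableOn_compact
        (isCompact_Icc.prod (isCompact_closedBall _ _))
    exact this.mono_set (Set.prod_mono Set.Ioc_subset_Icc_self ball_subset_closedBall)
  have swap := MeasureTheory.integral_integral_swap hint
  -- each rotated integral equals E₀
  have hrot : ∀ θ : ℝ, (∫ z in ball (0:ℂ) R, f (c + Complex.exp ((θ:ℂ) * Complex.I) * z)) = E₀ :=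
    fun θ => rot_inv (fun z => f (c + z)) R θ
  have lhs_eq : (∫ θ in Set.Ioc (0:ℝ) (2*π), ∫ z in ball (0:ℂ) R,
      f (c + Complex.exp ((θ:ℂ) * Complex.I) * z)) = (2*π:ℂ) * E₀ := by
    simp_rw [hrot]
    rw [MeasureTheory.setIntegral_const, measureReal_def, Real.volume_Ioc]
    rw [ENNReal.toReal_ofReal (by rw [sub_zero]; positivity)]
    rw [Complex.real_smul]
    push_cast; ring
  have rhs_eq : (∫ z in ball (0:ℂ) R, ∫ θ in Set.Ioc (0:ℝ) (2*π),
      f (c + Complex.exp ((θ:ℂ) * Complex.I) * z)) =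
      (volume (ball (0:ℂ) R)).toReal • ((2*π:ℂ) * f c) := by
    have : ∀ z : ℂ, (∫ θ in Set.Ioc (0:ℝ) (2*π),
        f (c + Complex.exp ((θ:ℂ) * Complex.I) * z)) = (2*π:ℂ) * f c := by
      intro z
      rw [← intervalIntegral.integral_of_le (by positivity : (0:ℝ) ≤ 2*π)]
      exact circle_MV' hf c z
    simp_rw [this]
    rw [MeasureTheory.setIntegral_const, measureReal_def]
  rw [lhs_eq, rhs_eq] at swap
  have : (2*π:ℂ) * E₀ = (2*π:ℂ) * ((volume (ball (0:ℂ) R)).toReal • f c) := by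
    rw [swap, mul_smul_comm]
  have hne : (2*π:ℂ) ≠ 0 := by
    simp [Real.pi_ne_zero]
  exact mul_left_cancel₀ hne this

lemma vol_ball_toReal {R : ℝ} (hR : 0 ≤ R) :
    (volume (ball (0:ℂ) R)).toReal = π * R^2 := by
  rw [Complex.volume_ball]
  rw [ENNReal.toReal_mul, ENNReal.toReal_pow, ENNReal.toReal_ofReal hR]
  simp [mul_comm]

lemma mv_norm_le (hf : Differentiable ℂ f) (c : ℂ) {R : ℝ} (hR : 0 < R) :
    ‖f c‖ ≤ (π * R^2)⁻¹ * ∫ w in ball c R, ‖f w‖ := by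
  have h1 : (∫ w in ball c R, f w) = (π * R^2 : ℝ) • f c := by
    rw [ball_shift f c R, ball_MV hf c hR, vol_ball_toReal hR.le]
  have hpos : (0:ℝ) < π * R^2 := by positivity
  have h2 : f c = ((π * R^2)⁻¹ : ℝ) • ∫ w in ball c R, f w := by
    rw [h1, smul_smul, inv_mul_cancel₀ hpos.ne', one_smul]
  calc ‖f c‖ = (π * R^2)⁻¹ * ‖∫ w in ball c R, f w‖ := by
        rw [h2, norm_smul, Real.norm_eq_abs, abs_of_pos (by positivity)]
    _ ≤ (π * R^2)⁻¹ * ∫ w in ball c R, ‖f w‖ := by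
        gcongr
        exact MeasureTheory.norm_integral_le_integral_norm _

lemma rpow_interp {x N p : ℝ} (hx : 0 ≤ x) (hxN : x ≤ N) (hp : 0 < p) (hp1 : p ≤ 1) :
    x ≤ N ^ (1 - p) * x ^ p := by
  rcases eq_or_lt_of_le hx with h0 | h0
  · rw [← h0, Real.zero_rpow hp.ne', mul_zero]
  · have : x = x ^ (1 - p) * x ^ p := by
      rw [← Real.rpow_add h0, sub_add_cancel, Real.rpow_one]
    refine this.trans_le ?_
    exact mul_le_mul_of_nonneg_right (Real.rpow_le_rpow hx hxN (show (0:ℝ) ≤ 1 - p by linarith))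
      (Real.rpow_nonneg hx p)

lemma cont_rpow {p : ℝ} (hp : 0 < p) (hf : Continuous f) :
    Continuous fun w => ‖f w‖ ^ p :=
  hf.norm.rpow_const (fun _ => Or.inr hp.le)

lemma int_on_ball {g : ℂ → ℝ} (hg : Continuous g) (c : ℂ) (t : ℝ) :
    IntegrableOn g (ball c t) volume :=
  (hg.continuousOn.integrableOn_compact (isCompact_closedBall c t)).mono_set
    ball_subset_closedBall

lemma N_bddAbove (hf : Continuous f) (z : ℂ) (t : ℝ) :
    BddAbove ((fun w => ‖f w‖) '' closedBall z t) :=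
  ((isCompact_closedBall z t).image hf.norm).bddAbove

lemma N_nonneg (z : ℂ) (t : ℝ) : 0 ≤ sSup ((fun w => ‖f w‖) '' closedBall z t) := by
  apply Real.sSup_nonneg
  rintro x ⟨w, _, rfl⟩
  exact norm_nonneg _

lemma sup_step {p : ℝ} (hp : 0 < p) (hp1 : p ≤ 1) (hf : Differentiable ℂ f) (z : ℂ)
    {s η : ℝ} (hs : 0 ≤ s) (hη : 0 < η) (hsη : s + η ≤ 2⁻¹) :
    sSup ((fun w => ‖f w‖) '' closedBall z s) ≤
      (sSup ((fun w => ‖f w‖) '' closedBall z (s+η))) ^ (1-p) *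
        ((π * η^2)⁻¹ * ∫ w in ball z 2⁻¹, ‖f w‖^p) := by
  set N := sSup ((fun w => ‖f w‖) '' closedBall z (s+η)) with hN
  set Ig := ∫ w in ball z 2⁻¹, ‖f w‖^p with hIg
  have hIg0 : 0 ≤ Ig :=
    setIntegral_nonneg measurableSet_ball (fun w _ => Real.rpow_nonneg (norm_nonneg _) p)
  have hN0 : 0 ≤ N := N_nonneg z (s+η)
  have hgoal0 : 0 ≤ N ^ (1-p) * ((π * η^2)⁻¹ * Ig) := by positivity
  apply Real.sSup_le _ hgoal0
  rintro x ⟨w, hw, rfl⟩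
  rw [mem_closedBall] at hw
  have h1 : ‖f w‖ ≤ (π * η^2)⁻¹ * ∫ v in ball w η, ‖f v‖ := mv_norm_le hf w hη
  have hsub : ball w η ⊆ ball z 2⁻¹ := fun v hv => by
    rw [mem_ball] at *
    calc dist v z ≤ dist v w + dist w z := dist_triangle v w z
      _ < η + s := by linarith
      _ ≤ 2⁻¹ := by linarith
  have hsub2 : ball w η ⊆ closedBall z (s+η) := fun v hv => by
    rw [mem_ball] at hv
    rw [mem_closedBall]
    calc dist v z ≤ dist v w + dist w z := dist_triangle v w z
      _ ≤ s + η := by linarith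
  have hbd : ∀ v ∈ ball w η, ‖f v‖ ≤ N ^ (1-p) * ‖f v‖ ^ p := fun v hv =>
    rpow_interp (norm_nonneg _)
      (le_csSup (N_bddAbove hf.continuous z (s+η)) ⟨v, hsub2 hv, rfl⟩) hp hp1
  have h2 : (∫ v in ball w η, ‖f v‖) ≤ ∫ v in ball w η, N ^ (1-p) * ‖f v‖ ^ p :=
    setIntegral_mono_on (int_on_ball hf.continuous.norm w η)
      (int_on_ball (continuous_const.mul (cont_rpow hp hf.continuous)) w η)
      measurableSet_ball hbd
  rw [MeasureTheory.integral_const_mul] at h2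
  have h3 : (∫ v in ball w η, ‖f v‖ ^ p) ≤ Ig :=
    setIntegral_mono_set (int_on_ball (cont_rpow hp hf.continuous) z 2⁻¹)
      (Eventually.of_forall fun v => Real.rpow_nonneg (norm_nonneg _) p)
      (HasSubset.Subset.eventuallyLE hsub)
  calc ‖f w‖ ≤ (π * η^2)⁻¹ * ∫ v in ball w η, ‖f v‖ := h1
    _ ≤ (π * η^2)⁻¹ * (N ^ (1-p) * ∫ v in ball w η, ‖f v‖ ^ p) := by
        apply mul_le_mul_of_nonneg_left h2 (by positivity)
    _ ≤ (π * η^2)⁻¹ * (N ^ (1-p) * Ig) := by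
        apply mul_le_mul_of_nonneg_left _ (by positivity)
        exact mul_le_mul_of_nonneg_left h3 (by positivity)
    _ = N ^ (1-p) * ((π * η^2)⁻¹ * Ig) := by ring

lemma pointwise_le_one {p : ℝ} (hp : 0 < p) (hp1 : p ≤ 1) (hf : Differentiable ℂ f) (z : ℂ) :
    ‖f z‖ ^ p ≤ (16/π * 4 ^ ((1-p)/p)) * ∫ w in ball z 2⁻¹, ‖f w‖ ^ p := by
  have hπ : (0:ℝ) < π := Real.pi_pos
  set q : ℝ := 1 - p with hq
  have hq0 : 0 ≤ q := by rw [hq]; linarith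
  have hq1 : q < 1 := by rw [hq]; linarith
  set Ig := ∫ w in ball z 2⁻¹, ‖f w‖ ^ p with hIg
  have hIg0 : 0 ≤ Ig :=
    setIntegral_nonneg measurableSet_ball fun w _ => Real.rpow_nonneg (norm_nonneg _) _
  set N : ℝ → ℝ := fun t => sSup ((fun w => ‖f w‖) '' closedBall z t) with hNdef
  set sk : ℕ → ℝ := fun k => 2⁻¹ - 2⁻¹ * 2⁻¹ ^ k with hsk
  set A : ℕ → ℝ := fun k => (16 / π * 4 ^ k) * Ig with hA
  have hsk0 : sk 0 = 0 := by simp [hsk]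
  have hsknn : ∀ k, 0 ≤ sk k := fun k => by
    have h1 : (2:ℝ)⁻¹ ^ k ≤ 1 := pow_le_one₀ (by norm_num) (by norm_num)
    simp only [hsk]; nlinarith
  have hskha : ∀ k, sk k + 4⁻¹ * 2⁻¹ ^ k = sk (k+1) := fun k => by
    simp only [hsk, pow_succ]; ring
  have hsklt : ∀ k, sk k ≤ 2⁻¹ := fun k => by
    have h1 : (0:ℝ) < 2⁻¹ ^ k := by positivity
    simp only [hsk]; nlinarith
  have hN0 : ∀ t, 0 ≤ N t := fun t => N_nonneg z t
  have hA0 : ∀ j, 0 ≤ A j := fun j => by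
    have : (0:ℝ) ≤ 16 / π * 4 ^ j := by positivity
    exact mul_nonneg this hIg0
  have hconst : ∀ k : ℕ, (π * ((4:ℝ)⁻¹ * 2⁻¹ ^ k)^2)⁻¹ = 16/π * 4 ^ k := by
    intro k
    have h2 : (((2:ℝ)⁻¹) ^ k) ^ 2 = ((4:ℝ) ^ k)⁻¹ := by
      rw [← pow_mul, pow_mul']
      norm_num
      rw [one_div, inv_pow]
    have h4k : ((4:ℝ) ^ k) ≠ 0 := by positivity
    rw [mul_pow, h2]
    field_simp
    ring
  have hstep : ∀ k, N (sk k) ≤ N (sk (k+1)) ^ q * A k := by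
    intro k
    have h := sup_step hp hp1 hf z (hsknn k)
      (show (0:ℝ) < 4⁻¹ * 2⁻¹ ^ k by positivity)
      (by rw [hskha k]; exact hsklt (k+1))
    rw [hskha k] at h
    refine h.trans (le_of_eq ?_)
    rw [hconst k]
  have hiter : ∀ K : ℕ, N (sk 0) ≤ N (sk K) ^ (q ^ K) * ∏ j ∈ Finset.range K, A j ^ (q ^ j) := by
    intro K
    induction K with
    | zero => simp
    | succ K ih =>
      have hP0 : 0 ≤ ∏ j ∈ Finset.range K, A j ^ (q ^ j) :=
        Finset.prod_nonneg fun j _ => Real.rpow_nonneg (hA0 j) _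
      refine ih.trans ?_
      calc N (sk K) ^ (q ^ K) * ∏ j ∈ Finset.range K, A j ^ (q ^ j)
          ≤ (N (sk (K+1)) ^ q * A K) ^ (q ^ K) * ∏ j ∈ Finset.range K, A j ^ (q ^ j) := by
            exact mul_le_mul_of_nonneg_right
              (Real.rpow_le_rpow (hN0 _) (hstep K) (by positivity)) hP0
        _ = N (sk (K+1)) ^ (q ^ (K+1)) * ∏ j ∈ Finset.range (K+1), A j ^ (q ^ j) := by
            rw [Real.mul_rpow (Real.rpow_nonneg (hN0 _) q) (hA0 K),
              ← Real.rpow_mul (hN0 _), ← pow_succ', Finset.prod_range_succ]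
            ring
  have hfzN : ‖f z‖ ≤ N (sk 0) := by
    apply le_csSup (N_bddAbove hf.continuous z (sk 0))
    exact ⟨z, mem_closedBall_self (by rw [hsk0]), rfl⟩
  rcases eq_or_lt_of_le hIg0 with h0 | hpos
  · -- Ig = 0
    have h1 := hiter 1
    have hA00 : A 0 ^ (q ^ 0) = 0 := by
      have : A 0 = 0 := by rw [hA]; rw [← h0]; simp
      rw [this, pow_zero, Real.rpow_one]
    rw [Finset.prod_range_one, hA00, mul_zero] at h1
    have hz0 : ‖f z‖ = 0 := le_antisymm (hfzN.trans h1) (norm_nonneg _)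
    rw [hz0, Real.zero_rpow hp.ne', ← h0, mul_zero]
  · -- Ig > 0
    have hA0' : ∀ j, 0 < A j := fun j => by
      have : (0:ℝ) < 16 / π * 4 ^ j := by positivity
      exact mul_pos this hpos
    set L : ℝ := max (N 2⁻¹) 1 with hL
    have hL0 : (0:ℝ) < L := lt_of_lt_of_le one_pos (le_max_right _ _)
    have hNle : ∀ k, N (sk k) ≤ L := by
      intro k
      refine le_trans ?_ (le_max_left _ _)
      apply csSup_le_csSup (N_bddAbove hf.continuous z 2⁻¹)
      · exact ((nonempty_closedBall.mpr (hsknn k)).image _)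
      · exact Set.image_mono (closedBall_subset_closedBall (hsklt k))
    set c1 : ℝ := Real.log (16/π * Ig) with hc1
    have hAeq : ∀ j : ℕ, Real.log (A j) = c1 + (j:ℝ) * Real.log 4 := by
      intro j
      show Real.log ((16/π * 4 ^ j) * Ig) = _
      rw [show (16/π * 4 ^ j) * Ig = (16/π * Ig) * 4 ^ j by ring]
      rw [Real.log_mul (by positivity) (by positivity), Real.log_pow]
    have hfun : (fun j : ℕ => Real.log (A j) * q ^ j) =
        fun j : ℕ => c1 * q ^ j + Real.log 4 * ((j:ℝ) * q ^ j) := by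
      funext j; rw [hAeq j]; ring
    have hqnorm : ‖q‖ < 1 := by rw [Real.norm_eq_abs, _root_.abs_of_nonneg hq0]; exact hq1
    set T : ℝ := c1 * (1-q)⁻¹ + Real.log 4 * (q / (1-q)^2) with hT
    have hsum : HasSum (fun j : ℕ => Real.log (A j) * q ^ j) T := by
      rw [hfun, hT]
      exact ((hasSum_geometric_of_lt_one hq0 hq1).mul_left c1).add
        ((hasSum_coe_mul_geometric_of_norm_lt_one hqnorm).mul_left (Real.log 4))
    have hbound : ∀ K : ℕ, N (sk 0) ≤
        Real.exp (Real.log L * q ^ K) *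
          Real.exp (∑ j ∈ Finset.range K, Real.log (A j) * q ^ j) := by
      intro K
      refine (hiter K).trans ?_
      have e1 : N (sk K) ^ (q ^ K) ≤ Real.exp (Real.log L * q ^ K) := by
        refine le_trans (Real.rpow_le_rpow (hN0 _) (hNle K) (by positivity)) ?_
        rw [Real.rpow_def_of_pos hL0]
      have e2 : (∏ j ∈ Finset.range K, A j ^ (q ^ j)) =
          Real.exp (∑ j ∈ Finset.range K, Real.log (A j) * q ^ j) := by
        rw [Real.exp_sum]
        exact Finset.prod_congr rfl fun j _ => Real.rpow_def_of_pos (hA0' j) _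
      rw [e2]
      exact mul_le_mul_of_nonneg_right e1 (Real.exp_pos _).le
    have hlim1 : Tendsto (fun K : ℕ => Real.log L * q ^ K) atTop (nhds 0) := by
      simpa using (tendsto_pow_atTop_nhds_zero_of_lt_one hq0 hq1).const_mul (Real.log L)
    have hlim : Tendsto (fun K : ℕ => Real.exp (Real.log L * q ^ K) *
        Real.exp (∑ j ∈ Finset.range K, Real.log (A j) * q ^ j)) atTop
        (nhds (Real.exp 0 * Real.exp T)) :=
      ((Real.continuous_exp.tendsto _).comp hlim1).mul
        ((Real.continuous_exp.tendsto _).comp hsum.tendsto_sum_nat)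
    have hfinal : N (sk 0) ≤ Real.exp 0 * Real.exp T :=
      ge_of_tendsto hlim (Eventually.of_forall hbound)
    rw [Real.exp_zero, one_mul] at hfinal
    have h5 : ‖f z‖ ≤ Real.exp T := hfzN.trans hfinal
    have h6 : ‖f z‖ ^ p ≤ Real.exp T ^ p := Real.rpow_le_rpow (norm_nonneg _) h5 hp.le
    refine h6.trans (le_of_eq ?_)
    rw [Real.rpow_def_of_pos (Real.exp_pos T), Real.log_exp]
    have h1q : 1 - q = p := by rw [hq]; ring
    have hTp : T * p = c1 + Real.log 4 * (q / p) := by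
      rw [hT, h1q]
      field_simp
    rw [hTp, Real.exp_add, hc1, Real.exp_log (by positivity)]
    rw [show Real.log 4 * (q / p) = Real.log 4 * (q/p) from rfl]
    rw [← Real.rpow_def_of_pos (by norm_num : (0:ℝ) < 4) (q/p)]
    rw [hq]
    ring

lemma vol_ball_toReal' (a : ℂ) {R : ℝ} (hR : 0 ≤ R) :
    (volume (ball a R)).toReal = π * R^2 := by
  rw [Complex.volume_ball]
  rw [ENNReal.toReal_mul, ENNReal.toReal_pow, ENNReal.toReal_ofReal hR]
  simp [mul_comm]

lemma pointwise_ge_one {p : ℝ} (hp1 : 1 ≤ p) (hf : Differentiable ℂ f) (z : ℂ) :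
    ‖f z‖ ^ p ≤ (4/π) * ∫ w in ball z 2⁻¹, ‖f w‖ ^ p := by
  have hπ : (0:ℝ) < π := Real.pi_pos
  have hp : (0:ℝ) < p := lt_of_lt_of_le one_pos hp1
  set μ := volume.restrict (ball z 2⁻¹) with hμ
  haveI : IsFiniteMeasure μ := ⟨by rw [Measure.restrict_apply_univ]; exact measure_ball_lt_top⟩
  haveI : NeZero μ := ⟨by
    rw [hμ]
    intro hzero
    have : volume (ball z 2⁻¹) = 0 := by
      rw [← Measure.restrict_apply_univ, hzero]; simp
    exact absurd this (measure_ball_pos volume z (by norm_num)).ne'⟩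
  have hvol : (μ Set.univ).toReal = π * (2⁻¹:ℝ)^2 := by
    rw [hμ, Measure.restrict_apply_univ, vol_ball_toReal' z (by norm_num)]
  have hint1 : Integrable (fun w => ‖f w‖) μ := int_on_ball hf.continuous.norm z 2⁻¹
  have hint2 : Integrable ((fun x : ℝ => x ^ p) ∘ fun w => ‖f w‖) μ := by
    have : ((fun x : ℝ => x ^ p) ∘ fun w => ‖f w‖) = fun w => ‖f w‖ ^ p := rfl
    rw [this]
    exact int_on_ball (cont_rpow hp hf.continuous) z 2⁻¹
  have hJ := (convexOn_rpow hp1).map_average_le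
    (ContinuousOn.rpow_const continuousOn_id fun x _ => Or.inr hp.le)
    isClosed_Ici (Eventually.of_forall fun w => mem_Ici.mpr (norm_nonneg (f w)))
    hint1 hint2
  have havg : (⨍ w, ‖f w‖ ∂μ) = (π * (2⁻¹:ℝ)^2)⁻¹ * ∫ w in ball z 2⁻¹, ‖f w‖ := by
    rw [average_eq, measureReal_def, hvol, smul_eq_mul]
  have h1 : ‖f z‖ ≤ ⨍ w, ‖f w‖ ∂μ := by
    rw [havg]
    exact mv_norm_le hf z (by norm_num)
  have h2 : ‖f z‖ ^ p ≤ (⨍ w, ‖f w‖ ∂μ) ^ p := by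
    apply Real.rpow_le_rpow (norm_nonneg _) h1 hp.le
  refine h2.trans (hJ.trans (le_of_eq ?_))
  rw [average_eq, measureReal_def, hvol, smul_eq_mul]
  have : ((fun x : ℝ => x ^ p) ∘ fun w => ‖f w‖) = fun w => ‖f w‖ ^ p := rfl
  norm_num
  left
  rw [show (4:ℝ) / π = (π * (2⁻¹:ℝ)^2)⁻¹ by rw [show π * (2⁻¹:ℝ)^2 = π/4 by ring]; field_simp]
  norm_num

/-- unified constant -/
lemma pointwise_all {p : ℝ} (hp : 0 < p) (hf : Differentiable ℂ f) (z : ℂ) :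
    ‖f z‖ ^ p ≤ (16/π * 4 ^ ((1-p)/p) + 4/π) * ∫ w in ball z 2⁻¹, ‖f w‖ ^ p := by
  have hπ : (0:ℝ) < π := Real.pi_pos
  have hIg0 : 0 ≤ ∫ w in ball z 2⁻¹, ‖f w‖ ^ p :=
    setIntegral_nonneg measurableSet_ball fun w _ => Real.rpow_nonneg (norm_nonneg _) _
  rcases le_or_gt p 1 with h1 | h1
  · refine (pointwise_le_one hp h1 hf z).trans ?_
    apply mul_le_mul_of_nonneg_right _ hIg0
    have : (0:ℝ) ≤ 4/π := by positivity
    linarith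
  · refine (pointwise_ge_one h1.le hf z).trans ?_
    apply mul_le_mul_of_nonneg_right _ hIg0
    have : (0:ℝ) ≤ 16/π * 4 ^ ((1-p)/p) := by positivity
    linarith

lemma deriv_pointwise {p : ℝ} (hp : 0 < p) (hf : Differentiable ℂ f) (z : ℂ) :
    ‖deriv f z‖ ^ p ≤
      (2:ℝ) ^ p * (16/π * 4 ^ ((1-p)/p) + 4/π) * ∫ w in ball z 1, ‖f w‖ ^ p := by
  have hπ : (0:ℝ) < π := Real.pi_pos
  set cp : ℝ := 16/π * 4 ^ ((1-p)/p) + 4/π with hcp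
  have hcp0 : 0 ≤ cp := by positivity
  obtain ⟨w0, hw0mem, hw0max⟩ := (isCompact_closedBall z 2⁻¹).exists_isMaxOn
    (nonempty_closedBall.mpr (by norm_num)) (hf.continuous.norm.continuousOn)
  have hC : ∀ x ∈ sphere z 2⁻¹, ‖f x‖ ≤ ‖f w0‖ := fun x hx =>
    hw0max (sphere_subset_closedBall hx)
  have hd : ‖deriv f z‖ ≤ ‖f w0‖ / 2⁻¹ :=
    Complex.norm_deriv_le_of_forall_mem_sphere_norm_le (by norm_num) hf.diffContOnCl hC
  have hd2 : ‖deriv f z‖ ≤ 2 * ‖f w0‖ := by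
    rw [div_inv_eq_mul] at hd
    linarith [hd]
  have h3 : ‖deriv f z‖ ^ p ≤ (2:ℝ) ^ p * ‖f w0‖ ^ p := by
    rw [← Real.mul_rpow (by norm_num) (norm_nonneg _)]
    exact Real.rpow_le_rpow (norm_nonneg _) hd2 hp.le
  have h4 : ‖f w0‖ ^ p ≤ cp * ∫ w in ball w0 2⁻¹, ‖f w‖ ^ p := pointwise_all hp hf w0
  have hsub : ball w0 2⁻¹ ⊆ ball z 1 := by
    apply ball_subset_ball'
    rw [mem_closedBall] at hw0mem
    linarith
  have h5 : (∫ w in ball w0 2⁻¹, ‖f w‖ ^ p) ≤ ∫ w in ball z 1, ‖f w‖ ^ p :=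
    setIntegral_mono_set (int_on_ball (cont_rpow hp hf.continuous) z 1)
      (Eventually.of_forall fun v => Real.rpow_nonneg (norm_nonneg _) p)
      (HasSubset.Subset.eventuallyLE hsub)
  calc ‖deriv f z‖ ^ p ≤ (2:ℝ) ^ p * ‖f w0‖ ^ p := h3
    _ ≤ (2:ℝ) ^ p * (cp * ∫ w in ball w0 2⁻¹, ‖f w‖ ^ p) :=
        mul_le_mul_of_nonneg_left h4 (Real.rpow_nonneg (by norm_num) p)
    _ ≤ (2:ℝ) ^ p * (cp * ∫ w in ball z 1, ‖f w‖ ^ p) := by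
        apply mul_le_mul_of_nonneg_left _ (Real.rpow_nonneg (by norm_num) p)
        exact mul_le_mul_of_nonneg_left h5 hcp0
    _ = (2:ℝ) ^ p * cp * ∫ w in ball z 1, ‖f w‖ ^ p := by ring

lemma key_bound {p : ℝ} (hp : 0 < p) (hf : Differentiable ℂ f) (w : ℝ → ℝ)
    (hw0 : ∀ t, 0 ≤ t → 0 ≤ w t) (hwmono : ∀ t s, 0 ≤ t → t ≤ s → w t ≤ w s)
    (hMp : ∀ t, 0 ≤ t → Mp p f t ≤ w t) {r : ℝ} (hr : 0 ≤ r) :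
    (1 / (2*π)) * (∫ θ in (0:ℝ)..(2*π), ‖deriv f ((r:ℂ) * Complex.exp ((θ:ℂ) * Complex.I))‖ ^ p)
      ≤ ((2:ℝ) ^ p * (16/π * 4 ^ ((1-p)/p) + 4/π) * π) * w (1+r) ^ p := by
  have hπ : (0:ℝ) < π := Real.pi_pos
  have h2π : (0:ℝ) ≤ 2*π := by positivity
  set D : ℝ := (2:ℝ) ^ p * (16/π * 4 ^ ((1-p)/p) + 4/π) with hD
  have hD0 : 0 ≤ D := by positivity
  have hgc : Continuous (fun z => ‖f z‖ ^ p) := cont_rpow hp hf.continuous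
  have hg0 : ∀ z : ℂ, 0 ≤ ‖f z‖ ^ p := fun z => Real.rpow_nonneg (norm_nonneg _) _
  have hw1r : 0 ≤ w (1+r) := hw0 _ (by linarith)
  have hB0 : 0 ≤ w (1+r) ^ p := Real.rpow_nonneg hw1r _
  -- derivative is differentiable hence continuous
  have hdc : Continuous (deriv f) := by
    have h1 : AnalyticOnNhd ℂ f Set.univ := Complex.analyticOnNhd_univ_iff_differentiable.mpr hf
    have h2 : Differentiable ℂ (deriv f) :=
      Complex.analyticOnNhd_univ_iff_differentiable.mp h1.deriv
    exact h2.continuous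
  set F : ℝ → ℂ → ℝ := fun θ ζ =>
    ‖f (Complex.exp ((θ:ℂ) * Complex.I) * ((r:ℂ) + ζ))‖ ^ p with hF
  have hFc : Continuous (Function.uncurry F) := by
    apply hgc.comp
    fun_prop
  have hFint : Integrable (Function.uncurry F)
      ((volume.restrict (Set.Ioc (0:ℝ) (2*π))).prod (volume.restrict (ball (0:ℂ) 1))) := by
    rw [Measure.prod_restrict]
    have h3 : IntegrableOn (Function.uncurry F)
        ((Set.Icc (0:ℝ) (2*π)) ×ˢ closedBall (0:ℂ) 1) (volume.prod volume) := by
      rw [← Measure.volume_eq_prod]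
      exact hFc.continuousOn.integrableOn_compact
        (isCompact_Icc.prod (isCompact_closedBall _ _))
    exact h3.mono_set (Set.prod_mono Set.Ioc_subset_Icc_self ball_subset_closedBall)
  -- step 1 : pointwise bound for the derivative, rewritten via shift and rotation
  have hptwise : ∀ θ : ℝ, ‖deriv f ((r:ℂ) * Complex.exp ((θ:ℂ) * Complex.I))‖ ^ p ≤
      D * ∫ ζ in ball (0:ℂ) 1, F θ ζ := by
    intro θ
    refine (deriv_pointwise hp hf _).trans (le_of_eq ?_)
    congr 1
    rw [ball_shift (fun z => ‖f z‖ ^ p) ((r:ℂ) * Complex.exp ((θ:ℂ) * Complex.I)) 1]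
    rw [← rot_inv (fun ζ => ‖f ((r:ℂ) * Complex.exp ((θ:ℂ) * Complex.I) + ζ)‖ ^ p) 1 θ]
    apply setIntegral_congr_fun measurableSet_ball
    intro ζ _
    simp only [hF]
    congr 2
    ring
  -- step 2 : inner bound for fixed ζ
  have hinner : ∀ ζ : ℂ, ζ ∈ ball (0:ℂ) 1 →
      (∫ θ in Set.Ioc (0:ℝ) (2*π), F θ ζ) ≤ 2*π * w (1+r) ^ p := by
    intro ζ hζ
    rw [← intervalIntegral.integral_of_le (by positivity : (0:ℝ) ≤ 2*π)]
    have hrot : (∫ θ in (0:ℝ)..(2*π), F θ ζ) = ∫ θ in (0:ℝ)..(2*π),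
        ‖f (((‖(r:ℂ) + ζ‖ : ℝ) : ℂ) * Complex.exp ((θ:ℂ) * Complex.I))‖ ^ p :=
      integral_rotate (fun z => ‖f z‖ ^ p) ((r:ℂ) + ζ)
    rw [hrot]
    set t : ℝ := ‖(r:ℂ) + ζ‖ with ht
    have ht0 : 0 ≤ t := norm_nonneg _
    have htle : t ≤ 1 + r := by
      rw [ht]
      calc ‖(r:ℂ) + ζ‖ ≤ ‖(r:ℂ)‖ + ‖ζ‖ :=
            norm_add_le _ _
        _ ≤ 1 + r := by
            have h1 : ‖(r:ℂ)‖ = r := by rw [Complex.norm_real, Real.norm_of_nonneg hr]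
            have h2 : ‖ζ‖ ≤ 1 := le_of_lt (mem_ball_zero_iff.mp hζ)
            linarith
    set J : ℝ := ∫ θ in (0:ℝ)..(2*π),
      ‖f ((t : ℂ) * Complex.exp ((θ:ℂ) * Complex.I))‖ ^ p with hJ
    have hX0 : 0 ≤ (1/(2*π)) * J := by
      apply mul_nonneg (by positivity)
      exact intervalIntegral.integral_nonneg h2π (fun x _ => hg0 _)
    have hMpdef : Mp p f t = ((1/(2*π)) * J) ^ (1/p) := rfl
    have hXeq : (1/(2*π)) * J = (Mp p f t) ^ p := by
      rw [hMpdef, ← Real.rpow_mul hX0, one_div p, inv_mul_cancel₀ hp.ne', Real.rpow_one]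
    have hMple : Mp p f t ≤ w (1+r) := (hMp t ht0).trans (hwmono t (1+r) ht0 htle)
    have hMp0 : 0 ≤ Mp p f t := by rw [hMpdef]; exact Real.rpow_nonneg hX0 _
    have hXB : (1/(2*π)) * J ≤ w (1+r) ^ p := by
      rw [hXeq]
      exact Real.rpow_le_rpow hMp0 hMple hp.le
    have hJeq : J = (2*π) * ((1/(2*π)) * J) := by
      field_simp
    rw [hJeq]
    exact mul_le_mul_of_nonneg_left hXB (by positivity)
  -- assemble
  have hIoc : (∫ θ in (0:ℝ)..(2*π), ‖deriv f ((r:ℂ) * Complex.exp ((θ:ℂ) * Complex.I))‖ ^ p)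
      = ∫ θ in Set.Ioc (0:ℝ) (2*π), ‖deriv f ((r:ℂ) * Complex.exp ((θ:ℂ) * Complex.I))‖ ^ p :=
    intervalIntegral.integral_of_le (by positivity)
  have hlhs_cont : Continuous
      (fun θ : ℝ => ‖deriv f ((r:ℂ) * Complex.exp ((θ:ℂ) * Complex.I))‖ ^ p) := by
    apply (cont_rpow hp hdc).comp
    fun_prop
  have hmono1 : (∫ θ in Set.Ioc (0:ℝ) (2*π),
        ‖deriv f ((r:ℂ) * Complex.exp ((θ:ℂ) * Complex.I))‖ ^ p)
      ≤ ∫ θ in Set.Ioc (0:ℝ) (2*π), D * ∫ ζ in ball (0:ℂ) 1, F θ ζ := by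
    apply setIntegral_mono_on
    · exact hlhs_cont.integrableOn_Ioc
    · exact (hFint.integral_prod_left).const_mul D
    · exact measurableSet_Ioc
    · exact fun θ _ => hptwise θ
  have hswap : (∫ θ in Set.Ioc (0:ℝ) (2*π), ∫ ζ in ball (0:ℂ) 1, F θ ζ)
      = ∫ ζ in ball (0:ℂ) 1, ∫ θ in Set.Ioc (0:ℝ) (2*π), F θ ζ :=
    MeasureTheory.integral_integral_swap hFint
  have hmono2 : (∫ ζ in ball (0:ℂ) 1, ∫ θ in Set.Ioc (0:ℝ) (2*π), F θ ζ)
      ≤ ∫ ζ in ball (0:ℂ) 1, (2*π * w (1+r) ^ p : ℝ) := by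
    apply setIntegral_mono_on
    · exact hFint.integral_prod_right
    · exact integrableOn_const measure_ball_lt_top.ne
    · exact measurableSet_ball
    · exact hinner
  have hconstint : (∫ _ζ in ball (0:ℂ) 1, (2*π * w (1+r) ^ p : ℝ)) = π * (2*π * w (1+r) ^ p) := by
    rw [MeasureTheory.setIntegral_const, measureReal_def, vol_ball_toReal (by norm_num : (0:ℝ) ≤ 1), smul_eq_mul]
    norm_num
  calc (1 / (2*π)) * (∫ θ in (0:ℝ)..(2*π),
        ‖deriv f ((r:ℂ) * Complex.exp ((θ:ℂ) * Complex.I))‖ ^ p)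
      ≤ (1 / (2*π)) * ∫ θ in Set.Ioc (0:ℝ) (2*π), D * ∫ ζ in ball (0:ℂ) 1, F θ ζ := by
        rw [hIoc]
        exact mul_le_mul_of_nonneg_left hmono1 (by positivity)
    _ = (1 / (2*π)) * (D * ∫ ζ in ball (0:ℂ) 1, ∫ θ in Set.Ioc (0:ℝ) (2*π), F θ ζ) := by
        rw [MeasureTheory.integral_const_mul, hswap]
    _ ≤ (1 / (2*π)) * (D * (π * (2*π * w (1+r) ^ p))) := by
        apply mul_le_mul_of_nonneg_left _ (by positivity)
        apply mul_le_mul_of_nonneg_left _ hD0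
        rw [← hconstint]
        exact hmono2
    _ = (D * π) * w (1+r) ^ p := by
        field_simp

end S12

/-- if `w(1+r) ≤ C u(r)` on `[0,∞)`, then differentiation is bounded
from `H_w^p(ℂ)` to `H_u^p(ℂ)` for every `0 < p < ∞`. -/
theorem stmt_12 (w u : ℝ → ℝ) (hw : IsWeight ⊤ w) (hu : IsWeight ⊤ u)
    (hgw : (fun r : ℝ => Real.log r) =o[atTop] (fun r => Real.log (w r)))
    (hgu : (fun r : ℝ => Real.log r) =o[atTop] (fun r => Real.log (u r)))
    (C : ℝ) (hCpos : 0 < C)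
    (hcomp : ∀ r : ℝ, 0 ≤ r → w (1 + r) ≤ C * u r) :
    ∀ p : ℝ, 0 < p →
      ∃ K : ℝ, ∀ f : ℂ → ℂ, Differentiable ℂ f →
        (∀ r, 0 ≤ r → Mp p f r ≤ w r) →
        ∀ r, 0 ≤ r → Mp p (deriv f) r ≤ K * u r := by
  intro p hp
  have hπ : (0:ℝ) < π := Real.pi_pos
  set D : ℝ := (2:ℝ) ^ p * (16/π * 4 ^ ((1-p)/p) + 4/π) * π with hD
  have hD0 : 0 ≤ D := by positivity
  refine ⟨D ^ (1/p) * C, ?_⟩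
  intro f hf hMp r hr
  have hw0 : ∀ t, 0 ≤ t → 0 ≤ w t :=
    fun t ht => (hw.pos t ht ENNReal.ofReal_lt_top).le
  have hwmono : ∀ t s, 0 ≤ t → t ≤ s → w t ≤ w s :=
    fun t s ht hts => hw.mono t s ht hts ENNReal.ofReal_lt_top
  have hu0 : 0 ≤ u r := (hu.pos r hr ENNReal.ofReal_lt_top).le
  have hkey := S12.key_bound hp hf w hw0 hwmono hMp hr
  set X : ℝ := (1 / (2*π)) *
    (∫ θ in (0:ℝ)..(2*π), ‖deriv f ((r:ℂ) * Complex.exp ((θ:ℂ) * Complex.I))‖ ^ p) with hX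
  have hX0 : 0 ≤ X := by
    apply mul_nonneg (by positivity)
    exact intervalIntegral.integral_nonneg (by positivity)
      (fun x _ => Real.rpow_nonneg (norm_nonneg _) _)
  have hMpdef : Mp p (deriv f) r = X ^ (1/p) := rfl
  have hcw : w (1+r) ^ p ≤ (C * u r) ^ p :=
    Real.rpow_le_rpow (hw0 _ (by linarith)) (hcomp r hr) hp.le
  have hkey2 : X ≤ D * (C * u r) ^ p :=
    hkey.trans (mul_le_mul_of_nonneg_left hcw hD0)
  have hfinal : X ^ (1/p) ≤ (D * (C * u r) ^ p) ^ (1/p) :=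
    Real.rpow_le_rpow hX0 hkey2 (by positivity)
  rw [hMpdef]
  refine hfinal.trans (le_of_eq ?_)
  have hCu0 : 0 ≤ C * u r := mul_nonneg hCpos.le hu0
  rw [Real.mul_rpow hD0 (Real.rpow_nonneg hCu0 _)]
  rw [one_div, Real.rpow_rpow_inv hCu0 hp.ne']
  rw [mul_assoc]
end
end
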